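/- Five-point reduction of the asymptotic flux (x-direction): let u : ℤ → ℝ and s : ℤ → ℝ with s(i) > 0 for all i, let Δx > 0 and ε ≠ 0. Define, for each i ∈ ℤ, G(i) = −(ε/s(i))·√(2/3)·(u(i+1) − u(i−1))/(2Δx), and define the interface flux F(i+1/2) = (1/4)·√(2/3)·( 2·G(i) + 2·G(i+1) ). Then for every i ∈ ℤ, (1/ε)·( F(i+1/2) − F(i−1/2) )/Δx = −(1/3)·( (u(i+2) − u(i))/(2Δx·s(i+1)) − (u(i) − u(i−2))/(2Δx·s(i−1)) )/Δx, i.e. the flux divergence divided by ε equals a five-point central-difference approximation of −∂/∂x( (1/(3s))·∂u/∂x ). -/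

import Mathlib

/-- Five-point reduction of the asymptotic flux in the x-direction: the flux
divergence divided by `ε` equals a five-point central-difference approximation
of `−∂/∂x((1/(3s))·∂u/∂x)`. -/
theorem five_point_asymptotic_flux_reduction
    (u s : ℤ → ℝ) (hs : ∀ i, 0 < s i)
    (Δx ε : ℝ) (hΔx : 0 < Δx) (hε : ε ≠ 0)
    (G F : ℤ → ℝ)
    -- leading-order first moment: central-difference discretization of
    -- `−(ε/s)·√(2/3)·∂u/∂x`
    (hG : ∀ i, G i = -(ε / s i) * Real.sqrt (2 / 3) * (u (i + 1) - u (i - 1)) / (2 * Δx))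
    -- interface flux `F(i+1/2)`, indexed by `i`
    (hF : ∀ i, F i = (1 / 4) * Real.sqrt (2 / 3) * (2 * G i + 2 * G (i + 1))) :
    ∀ i, (1 / ε) * ((F i - F (i - 1)) / Δx) =
      -(1 / 3) * ((u (i + 2) - u i) / (2 * Δx * s (i + 1))
        - (u i - u (i - 2)) / (2 * Δx * s (i - 1))) / Δx := by
  intro i
  have hsq : Real.sqrt (2 / 3) * Real.sqrt (2 / 3) = 2 / 3 :=
    Real.mul_self_sqrt (by norm_num)
  have h1 : i - 1 + 1 = i := by ring
  have h2 : i + 1 + 1 = i + 2 := by ring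
  have h3 : i + 1 - 1 = i := by ring
  have h4 : i - 1 - 1 = i - 2 := by ring
  rw [hF, hF, hG, hG, hG, hG, h1, h2, h3, h4]
  generalize Real.sqrt (2 / 3) = a at hsq ⊢
  have ha2 : a ^ 2 = 2 / 3 := by rw [sq, hsq]
  have hs1 := (hs (i + 1)).ne'
  have hs2 := (hs (i - 1)).ne'
  field_simp
  linear_combination (-6 *
    (s (i - 1) * (u (i + 2) - u i) - s (i + 1) * (u i - u (i - 2)))) * ha2
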